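/- If f : ℝⁿ → ℝ is real analytic on a connected open set U ⊆ ℝⁿ and f is not identically zero on U, then the zero set {x ∈ U : f(x) = 0} has Lebesgue measure zero. -/

import Mathlib

open MeasureTheory Filter Set

variable {E : Type*} [NormedAddCommGroup E] [NormedSpace ℝ E]

/-- chain rule for iterated derivatives along a line -/
theorem aux_line_iteratedDeriv {f : E → ℝ} {U : Set E} (hU : IsOpen U)
    (hf : AnalyticOnNhd ℝ f U) (v : E) (k : ℕ) :
    ∀ (x : E) (t : ℝ), x + t • v ∈ U →
      iteratedDeriv k (fun s => f (x + s • v)) t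
        = iteratedFDeriv ℝ k f (x + t • v) (fun _ => v) := by
  induction k with
  | zero => intro x t ht; simp [iteratedDeriv_zero, iteratedFDeriv_zero_apply]
  | succ k ih =>
    intro x t ht
    have hWopen : IsOpen {s : ℝ | x + s • v ∈ U} :=
      hU.preimage (by continuity)
    have hEv : (iteratedDeriv k fun s => f (x + s • v))
        =ᶠ[nhds t] fun s => iteratedFDeriv ℝ k f (x + s • v) (fun _ => v) := by
      filter_upwards [hWopen.mem_nhds ht] with s hs using ih x s hs
    rw [iteratedDeriv_succ, hEv.deriv_eq]
    -- derivative of s ↦ iteratedFDeriv k f (x+s•v) (v^k)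
    have hana := (hf.iteratedFDeriv_of_isOpen hU k) _ ht
    have hdiff : DifferentiableAt ℝ (iteratedFDeriv ℝ k f) (x + t • v) :=
      hana.differentiableAt
    have hline : HasDerivAt (fun s : ℝ => x + s • v) v t := by
      simpa using ((hasDerivAt_id t).smul_const v).const_add x
    have h1 : HasDerivAt (fun s => iteratedFDeriv ℝ k f (x + s • v))
        (fderiv ℝ (iteratedFDeriv ℝ k f) (x + t • v) v) t :=
      hdiff.hasFDerivAt.comp_hasDerivAt t hline
    have h2 := (ContinuousMultilinearMap.apply ℝ (fun _ : Fin k => E) ℝ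
        (fun _ => v)).hasFDerivAt.comp_hasDerivAt t h1
    have h3 : deriv (fun s => iteratedFDeriv ℝ k f (x + s • v) (fun _ => v)) t
        = (fderiv ℝ (iteratedFDeriv ℝ k f) (x + t • v) v) (fun _ => v) := h2.deriv
    rw [h3, iteratedFDeriv_succ_apply_left]
    rfl


open MeasureTheory Filter Set

variable {E : Type*} [NormedAddCommGroup E] [NormedSpace ℝ E]

theorem aux_exists_dir {f : E → ℝ} {a : E} (hfa : AnalyticAt ℝ f a)
    (h : ¬ (f =ᶠ[nhds a] 0)) :
    ∃ (k : ℕ) (v : E), iteratedFDeriv ℝ k f a (fun _ => v) ≠ 0 := by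
  by_contra hc
  push_neg at hc
  apply h
  obtain ⟨p, hp⟩ := hfa
  obtain ⟨r, hr⟩ := hp
  have hball : EMetric.ball a r ∈ nhds a := EMetric.ball_mem_nhds a hr.r_pos
  filter_upwards [hball] with y hy
  have hy' : y - a ∈ EMetric.ball (0 : E) r := by
    change edist (y - a) 0 < r; change edist y a < r at hy; rw [edist_zero_right]; rwa [edist_eq_enorm_sub] at hy
  have hsum := hr.hasSum hy'
  have hz : ∀ k : ℕ, p k (fun _ => y - a) = 0 := by
    intro k
    have h1 := hr.factorial_smul (y - a) k
    rw [hc k (y - a)] at h1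
    have hk : (Nat.factorial k : ℝ) ≠ 0 := by
      exact_mod_cast Nat.factorial_ne_zero k
    have h2 : (Nat.factorial k : ℝ) * p k (fun _ => y - a) = 0 := by
      rw [← nsmul_eq_mul, h1]
    rcases mul_eq_zero.1 h2 with h3 | h3
    · exact absurd h3 hk
    · exact h3
  have hzero : HasSum (fun k : ℕ => p k (fun _ => y - a)) 0 := by
    simpa [hz] using (hasSum_zero : HasSum (fun _ : ℕ => (0:ℝ)) 0)
  have := hsum.unique hzero
  simpa using this

theorem aux_slice_countable {f : E → ℝ} {U V : Set E} (hU : IsOpen U)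
    (hf : AnalyticOnNhd ℝ f U) (hVU : V ⊆ U) {k : ℕ} {v : E}
    (hφ : ∀ y ∈ V, iteratedFDeriv ℝ k f y (fun _ => v) ≠ 0) (x : E) :
    Set.Countable {t : ℝ | x + t • v ∈ V ∧ f (x + t • v) = 0} := by
  set S := {t : ℝ | x + t • v ∈ V ∧ f (x + t • v) = 0} with hS
  have key : ∀ t₀ ∈ S, ({t₀} : Set ℝ) ∈ nhdsWithin t₀ S := by
    intro t₀ ht₀
    obtain ⟨hmemV, hzero⟩ := ht₀
    have hmemU : x + t₀ • v ∈ U := hVU hmemV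
    set g : ℝ → ℝ := fun s => f (x + s • v) with hg
    have hline : AnalyticAt ℝ (fun s : ℝ => x + s • v) t₀ := by
      have := (ContinuousLinearMap.smulRight (ContinuousLinearMap.id ℝ ℝ) v).analyticAt t₀
      convert (analyticAt_const (v := x)).add this using 1
      ext s; simp
    have hga : AnalyticAt ℝ g t₀ :=
      AnalyticAt.comp (f := fun s : ℝ => x + s • v) (hf _ hmemU) hline
    -- g is not eventually zero at t₀
    have hnev : ¬ (g =ᶠ[nhds t₀] 0) := by
      intro hev
      have h1 : iteratedDeriv k g t₀ = iteratedFDeriv ℝ k f (x + t₀ • v) (fun _ => v) :=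
        aux_line_iteratedDeriv hU hf v k x t₀ hmemU
      have h2 : iteratedDeriv k g t₀ = 0 := by
        have hev' : g =ᶠ[nhdsWithin t₀ (Set.univ : Set ℝ)] (0 : ℝ → ℝ) :=
          hev.filter_mono nhdsWithin_le_nhds
        have h3 := Filter.EventuallyEq.iteratedFDerivWithin_eq (𝕜 := ℝ) hev' (by simpa using hev.eq_of_nhds) k
        rw [iteratedFDerivWithin_univ, iteratedFDerivWithin_univ] at h3
        rw [iteratedDeriv_eq_iteratedFDeriv, h3]
        have h4 : (0 : ℝ → ℝ) = fun _ : ℝ => (0:ℝ) := rfl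
        rw [h4, iteratedFDeriv_zero_fun]
        simp
      exact hφ _ hmemV (h1 ▸ h2)
    have hiso : ∀ᶠ s in nhdsWithin t₀ {t₀}ᶜ, g s ≠ 0 :=
      hga.eventually_eq_zero_or_eventually_ne_zero.resolve_left hnev
    rw [eventually_nhdsWithin_iff] at hiso
    rw [mem_nhdsWithin_iff_eventually]
    filter_upwards [hiso] with s hs hsS
    by_contra hne
    have hne' : s ∈ ({t₀}ᶜ : Set ℝ) := by simpa using hne
    exact hs hne' hsS.2
  obtain ⟨T, hTS, hTc, hcover⟩ := TopologicalSpace.countable_cover_nhdsWithin key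
  refine hTc.mono ?_
  intro t ht
  have hmem := hcover ht
  simp only [mem_iUnion, mem_singleton_iff, exists_prop] at hmem
  obtain ⟨t', ht', rfl⟩ := hmem
  exact ht'

open MeasureTheory Filter Set

theorem aux_null_of_slices {n : ℕ} {A : Set (EuclideanSpace ℝ (Fin n))}
    (hA : MeasurableSet A) (v : EuclideanSpace ℝ (Fin n))
    (hcount : ∀ x, Set.Countable {t : ℝ | x + t • v ∈ A}) :
    volume A = 0 := by
  have hm : Measurable fun p : ℝ × EuclideanSpace ℝ (Fin n) =>
      A.indicator (1 : EuclideanSpace ℝ (Fin n) → ENNReal) (p.2 + p.1 • v) := by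
    have hc : Continuous fun p : ℝ × EuclideanSpace ℝ (Fin n) => p.2 + p.1 • v := by
      fun_prop
    exact (measurable_one.indicator hA).comp hc.measurable
  have swap := lintegral_lintegral_swap (μ := volume.restrict (Set.Ioo (0:ℝ) 1))
    (ν := (volume : Measure (EuclideanSpace ℝ (Fin n))))
    (f := fun t x => A.indicator 1 (x + t • v)) hm.aemeasurable
  have lhs : ∫⁻ t in Set.Ioo (0:ℝ) 1, ∫⁻ x, A.indicator 1 (x + t • v) ∂volume ∂volume
      = volume A := by
    have inner : ∀ t : ℝ, ∫⁻ x, A.indicator (1 : EuclideanSpace ℝ (Fin n) → ENNReal)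
        (x + t • v) ∂volume = volume A := by
      intro t
      have h1 : (fun x : EuclideanSpace ℝ (Fin n) => A.indicator 1 (x + t • v))
          = ((fun x : EuclideanSpace ℝ (Fin n) => x + t • v) ⁻¹' A).indicator
            (1 : EuclideanSpace ℝ (Fin n) → ENNReal) := by
        ext x
        by_cases hx : x + t • v ∈ A <;> simp [Set.indicator_apply, hx]
      rw [h1]
      exact (lintegral_indicator_one (hA.preimage (measurable_add_const _))).trans
        (measure_preimage_add_right volume (t • v) A)
    simp only [inner]
    simp [Real.volume_Ioo]
  have rhs : ∫⁻ x, ∫⁻ t in Set.Ioo (0:ℝ) 1, A.indicator 1 (x + t • v) ∂volume ∂volume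
      = 0 := by
    have inner : ∀ x : EuclideanSpace ℝ (Fin n),
        ∫⁻ t in Set.Ioo (0:ℝ) 1, A.indicator (1 : EuclideanSpace ℝ (Fin n) → ENNReal)
          (x + t • v) ∂volume = 0 := by
      intro x
      have h1 : (fun t : ℝ => A.indicator 1 (x + t • v))
          = ({t : ℝ | x + t • v ∈ A}).indicator (1 : ℝ → ENNReal) := by
        ext t
        by_cases hx : x + t • v ∈ A <;> simp [Set.indicator_apply, hx]
      rw [h1]
      refine le_antisymm ?_ (zero_le)
      calc ∫⁻ t in Set.Ioo (0:ℝ) 1, ({t : ℝ | x + t • v ∈ A}).indicator 1 t ∂volume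
          = (volume.restrict (Set.Ioo (0:ℝ) 1)) {t : ℝ | x + t • v ∈ A} :=
            lintegral_indicator_one (hcount x).measurableSet
        _ ≤ volume {t : ℝ | x + t • v ∈ A} := Measure.restrict_le_self _
        _ = 0 := (hcount x).measure_zero _
    simp only [inner]
    simp
  rw [lhs, rhs] at swap
  exact swap


open MeasureTheory Filter Set

/-- The zero set of a real analytic function, not identically zero, on a connected
open subset of `ℝⁿ` has Lebesgue measure zero. -/
theorem stmt_2 (n : ℕ) (U : Set (EuclideanSpace ℝ (Fin n)))
    (hU : IsOpen U) (hUc : IsConnected U)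
    (f : EuclideanSpace ℝ (Fin n) → ℝ) (hf : AnalyticOnNhd ℝ f U)
    (hne : ∃ x ∈ U, f x ≠ 0) :
    volume {x ∈ U | f x = 0} = 0 := by
  -- f has nonzero germ everywhere on U
  have hgerm : ∀ a ∈ U, ¬ (f =ᶠ[nhds a] 0) := by
    intro a ha hev
    obtain ⟨x₀, hx₀U, hx₀⟩ := hne
    exact hx₀ (hf.eqOn_zero_of_preconnected_of_eventuallyEq_zero
      hUc.isPreconnected ha hev hx₀U)
  -- the open set where f ≠ 0
  have hBopen : IsOpen {x ∈ U | f x ≠ 0} :=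
    hf.continuousOn.isOpen_inter_preimage hU isOpen_compl_singleton
  apply measure_null_of_locally_null
  intro a ⟨haU, hfa0⟩
  obtain ⟨k, v, hk⟩ := aux_exists_dir (hf a haU) (hgerm a haU)
  -- find an open neighborhood V ⊆ U where the directional derivative stays nonzero
  have hcont : ContinuousAt (fun y => iteratedFDeriv ℝ k f y (fun _ => v)) a := by
    have h1 : ContinuousAt (iteratedFDeriv ℝ k f) a :=
      ((hf.iteratedFDeriv_of_isOpen hU k) a haU).continuousAt
    exact ((ContinuousMultilinearMap.apply ℝ
      (fun _ : Fin k => EuclideanSpace ℝ (Fin n)) ℝ (fun _ => v)).continuous.continuousAt).comp h1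
  have hev : ∀ᶠ y in nhds a, y ∈ U ∧ iteratedFDeriv ℝ k f y (fun _ => v) ≠ 0 :=
    (Filter.eventually_iff_exists_mem.mpr ⟨U, hU.mem_nhds haU, fun y hy => hy⟩).and (hcont.eventually_ne hk)
  obtain ⟨V, hVsub, hVopen, haV⟩ := eventually_nhds_iff.1 hev
  have hVU : V ⊆ U := fun y hy => (hVsub y hy).1
  set A : Set (EuclideanSpace ℝ (Fin n)) := {x ∈ V | f x = 0} with hAdef
  have hAmeas : MeasurableSet A := by
    have : A = V \ {x ∈ U | f x ≠ 0} := by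
      ext x
      constructor
      · rintro ⟨hxV, hx0⟩
        exact ⟨hxV, fun h => h.2 hx0⟩
      · rintro ⟨hxV, hx⟩
        refine ⟨hxV, ?_⟩
        by_contra h0
        exact hx ⟨hVU hxV, h0⟩
    rw [this]
    exact hVopen.measurableSet.diff hBopen.measurableSet
  have hAnull : volume A = 0 := by
    apply aux_null_of_slices hAmeas v
    intro x
    have : {t : ℝ | x + t • v ∈ A} = {t : ℝ | x + t • v ∈ V ∧ f (x + t • v) = 0} := rfl
    rw [this]
    exact aux_slice_countable hU hf hVU (fun y hy => (hVsub y hy).2) x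
  refine ⟨V ∩ {x ∈ U | f x = 0}, ?_, ?_⟩
  · exact Filter.inter_mem (mem_nhdsWithin_of_mem_nhds (hVopen.mem_nhds haV))
      self_mem_nhdsWithin
  · refine measure_mono_null ?_ hAnull
    rintro x ⟨hxV, _, hx0⟩
    exact ⟨hxV, hx0⟩
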